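/- Let V be a real normed vector space, c ∈ V, g : Fin h → V, u : Fin q → V, and E : Fin r → Fin h → ℕ. Let H = { i | E k i is even for all k } and K its complement. Define PZ = { c + ∑_i (∏_k (α k)^{E k i}) • g i + ∑_j (β j) • u j | α k ∈ [-1,1], β j ∈ [-1,1] } and Z = { c + ∑_{i ∈ K} (γ i) • g i + ∑_{i ∈ H} ((γ i + 1)/2) • g i + ∑_j (β j) • u j | γ i ∈ [-1,1], β j ∈ [-1,1] }. Then the Hausdorff distance between PZ and Z is at most ∑_i ‖g i‖. -/

import Mathlib

open Finset

/-- The Hausdorff distance between a polynomial zonotope and its zonotope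
overapproximation is bounded by the sum of the norms of the dependent generators. -/
theorem hausdorffDist_polyZonotope_zonotopeApprox_le {V : Type*} [NormedAddCommGroup V]
    [NormedSpace ℝ V] {h q r : ℕ} (c : V) (g : Fin h → V) (u : Fin q → V)
    (E : Fin r → Fin h → ℕ) :
    Metric.hausdorffDist
      { v : V | ∃ α : Fin r → ℝ, ∃ β : Fin q → ℝ,
          (∀ k, α k ∈ Set.Icc (-1 : ℝ) 1) ∧ (∀ j, β j ∈ Set.Icc (-1 : ℝ) 1) ∧
          v = c + ∑ i, (∏ k, (α k) ^ (E k i)) • g i + ∑ j, (β j) • u j }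
      { v : V | ∃ γ : Fin h → ℝ, ∃ β : Fin q → ℝ,
          (∀ i, γ i ∈ Set.Icc (-1 : ℝ) 1) ∧ (∀ j, β j ∈ Set.Icc (-1 : ℝ) 1) ∧
          v = c + ∑ i ∈ Finset.univ.filter (fun i => ¬ (∀ k, Even (E k i))), (γ i) • g i
                + ∑ i ∈ Finset.univ.filter (fun i => ∀ k, Even (E k i)),
                    ((γ i + 1) / 2) • g i
                + ∑ j, (β j) • u j }
      ≤ ∑ i, ‖g i‖ := by
  classical
  have hR : (0:ℝ) ≤ ∑ i, ‖g i‖ := Finset.sum_nonneg fun i _ => norm_nonneg _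
  apply Metric.hausdorffDist_le_of_mem_dist hR
  · rintro x ⟨α, β, hα, hβ, rfl⟩
    set p : Fin h → ℝ := fun i => ∏ k, (α k) ^ (E k i) with hp
    have hp1 : ∀ i, |p i| ≤ 1 := by
      intro i
      rw [abs_prod]
      refine Finset.prod_le_one (fun k _ => abs_nonneg _) (fun k _ => ?_)
      rw [abs_pow]
      exact pow_le_one₀ (abs_nonneg _) (abs_le.2 (hα k))
    have hp0 : ∀ i, (∀ k, Even (E k i)) → 0 ≤ p i := by
      intro i hi
      exact Finset.prod_nonneg fun k _ => (hi k).pow_nonneg _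
    set γ : Fin h → ℝ := fun i =>
      if ∀ k, Even (E k i) then 2 * p i - 1 else p i with hγdef
    refine ⟨_, ⟨γ, β, ?_, hβ, rfl⟩, ?_⟩
    · intro i
      by_cases hi : ∀ k, Even (E k i)
      · have h0 := hp0 i hi
        have h1 := (abs_le.1 (hp1 i)).2
        simp only [γ, if_pos hi, Set.mem_Icc]
        constructor <;> nlinarith
      · simpa only [γ, if_neg hi, Set.mem_Icc] using abs_le.1 (hp1 i)
    · have e1 : ∑ i ∈ Finset.univ.filter (fun i => ¬ (∀ k, Even (E k i))), (γ i) • g i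
          = ∑ i ∈ Finset.univ.filter (fun i => ¬ (∀ k, Even (E k i))), (p i) • g i := by
        refine Finset.sum_congr rfl fun i hi => ?_
        rw [Finset.mem_filter] at hi
        simp [γ, if_neg hi.2]
      have e2 : ∑ i ∈ Finset.univ.filter (fun i => ∀ k, Even (E k i)), ((γ i + 1) / 2) • g i
          = ∑ i ∈ Finset.univ.filter (fun i => ∀ k, Even (E k i)), (p i) • g i := by
        refine Finset.sum_congr rfl fun i hi => ?_
        rw [Finset.mem_filter] at hi
        rw [hγdef]
        simp only [if_pos hi.2]
        ring_nf
      have e3 : ∑ i ∈ Finset.univ.filter (fun i => ¬ (∀ k, Even (E k i))), (p i) • g i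
          + ∑ i ∈ Finset.univ.filter (fun i => ∀ k, Even (E k i)), (p i) • g i
          = ∑ i, (p i) • g i := by
        rw [add_comm, Finset.sum_filter_add_sum_filter_not]
      have : c + ∑ i ∈ Finset.univ.filter (fun i => ¬ (∀ k, Even (E k i))), (γ i) • g i
          + ∑ i ∈ Finset.univ.filter (fun i => ∀ k, Even (E k i)), ((γ i + 1) / 2) • g i
          + ∑ j, (β j) • u j
          = c + ∑ i, (p i) • g i + ∑ j, (β j) • u j := by
        rw [e1, e2, add_assoc c, e3]
      rw [this, dist_self]
      exact hR
  · rintro y ⟨γ, β, hγ, hβ, rfl⟩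
    set t : Fin h → ℝ := fun i => ∏ k, (0:ℝ) ^ (E k i) with ht
    have ht01 : ∀ i, 0 ≤ t i ∧ t i ≤ 1 := by
      intro i
      constructor
      · exact Finset.prod_nonneg fun k _ => pow_nonneg le_rfl _
      · exact Finset.prod_le_one (fun k _ => pow_nonneg le_rfl _)
          (fun k _ => pow_le_one₀ le_rfl zero_le_one)
    have ht0 : ∀ i, ¬ (∀ k, Even (E k i)) → t i = 0 := by
      intro i hi
      push_neg at hi
      obtain ⟨k, hk⟩ := hi
      have : E k i ≠ 0 := fun h0 => hk (h0 ▸ Even.zero)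
      exact Finset.prod_eq_zero (Finset.mem_univ k) (zero_pow this)
    refine ⟨c + ∑ i, (t i) • g i + ∑ j, (β j) • u j,
      ⟨(fun _ => 0), β, fun k => ⟨by norm_num, by norm_num⟩, hβ, by simp [ht]⟩, ?_⟩
    set d : Fin h → ℝ := fun i =>
      if ∀ k, Even (E k i) then t i - (γ i + 1) / 2 else t i - γ i with hd
    have hd1 : ∀ i, |d i| ≤ 1 := by
      intro i
      by_cases hi : ∀ k, Even (E k i)
      · have := ht01 i
        have hg := hγ i
        simp only [d, if_pos hi]
        rw [abs_le]
        constructor <;> [nlinarith [hg.1, hg.2]; nlinarith [hg.1, hg.2]]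
      · simp only [d, if_neg hi, ht0 i hi, zero_sub, abs_neg]
        exact abs_le.2 (hγ i)
    have key : (c + ∑ i, (t i) • g i + ∑ j, (β j) • u j)
        - (c + ∑ i ∈ Finset.univ.filter (fun i => ¬ (∀ k, Even (E k i))), (γ i) • g i
          + ∑ i ∈ Finset.univ.filter (fun i => ∀ k, Even (E k i)), ((γ i + 1) / 2) • g i
          + ∑ j, (β j) • u j)
        = ∑ i, (d i) • g i := by
      have hsplit : ∑ i, (t i) • g i
          = ∑ i ∈ Finset.univ.filter (fun i => ¬ (∀ k, Even (E k i))), (t i) • g i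
          + ∑ i ∈ Finset.univ.filter (fun i => ∀ k, Even (E k i)), (t i) • g i := by
        rw [add_comm, Finset.sum_filter_add_sum_filter_not]
      have hdsplit : ∑ i, (d i) • g i
          = ∑ i ∈ Finset.univ.filter (fun i => ¬ (∀ k, Even (E k i))), (d i) • g i
          + ∑ i ∈ Finset.univ.filter (fun i => ∀ k, Even (E k i)), (d i) • g i := by
        rw [add_comm, Finset.sum_filter_add_sum_filter_not]
      rw [hsplit, hdsplit]
      have c1 : ∑ i ∈ Finset.univ.filter (fun i => ¬ (∀ k, Even (E k i))), (d i) • g i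
          = ∑ i ∈ Finset.univ.filter (fun i => ¬ (∀ k, Even (E k i))),
              ((t i) • g i - (γ i) • g i) := by
        refine Finset.sum_congr rfl fun i hi => ?_
        rw [Finset.mem_filter] at hi
        simp [d, if_neg hi.2, sub_smul]
      have c2 : ∑ i ∈ Finset.univ.filter (fun i => ∀ k, Even (E k i)), (d i) • g i
          = ∑ i ∈ Finset.univ.filter (fun i => ∀ k, Even (E k i)),
              ((t i) • g i - ((γ i + 1) / 2) • g i) := by
        refine Finset.sum_congr rfl fun i hi => ?_
        rw [Finset.mem_filter] at hi
        simp [d, if_pos hi.2, sub_smul]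
      rw [c1, c2, Finset.sum_sub_distrib, Finset.sum_sub_distrib]
      abel
    rw [dist_comm, dist_eq_norm, key]
    calc ‖∑ i, (d i) • g i‖ ≤ ∑ i, ‖(d i) • g i‖ := norm_sum_le _ _
      _ ≤ ∑ i, ‖g i‖ := by
          refine Finset.sum_le_sum fun i _ => ?_
          rw [norm_smul, Real.norm_eq_abs]
          exact mul_le_of_le_one_left (norm_nonneg _) (hd1 i)
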